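/- arXiv:2107.10037 — 2 statements merged into one kernel-verified Lean document; each statement's English description precedes it below -/
import Mathlib

section
/- Let G be a finite simple graph with m edges, n vertices, and π_3(G) copies of P_3 (paths with two edges). Under a uniform random c-coloring F, the variance of M^{i,i}, the number of monochromatic edges of color i, equals m (c_i^{\underline{2}}/n^{\underline{2}})(1 - m c_i^{\underline{2}}/n^{\underline{2}}) + 2[ (c_i^{\underline{3}}/n^{\underline{3}} - c_i^{\underline{4}}/n^{\underline{4}}) π_3(G) + (c_i^{\underline{4}}/n^{\underline{4}}) (m choose 2) ]. -/
open Finset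

/-- The set of `c`-colorings of `V`. -/
def colorings (V : Type) [Fintype V] [DecidableEq V] (s : ℕ) (c : Fin s → ℕ) :
    Finset (V → Fin s) :=
  Finset.univ.filter fun f =>
    ∀ i, (Finset.univ.filter fun v => f v = i).card = c i

/-- `M^{i,i} f` : the number of edges of `G` whose endpoints both get color `i`. -/
def monoEdges (V : Type) [Fintype V] [DecidableEq V] (G : SimpleGraph V)
    [DecidableRel G.Adj] (s : ℕ) (i : Fin s) (f : V → Fin s) : ℕ :=
  (G.edgeFinset.filter fun e => Sym2.map f e = Sym2.diag i).card

namespace VarAux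

variable {V : Type} [Fintype V] [DecidableEq V] {s : ℕ}


lemma mem_colorings {c : Fin s → ℕ} {f : V → Fin s} :
    f ∈ colorings V s c ↔ ∀ j, (univ.filter fun v => f v = j).card = c j := by
  simp [colorings]

lemma comp_perm_mem {c : Fin s → ℕ} (σ : Equiv.Perm V) {f : V → Fin s}
    (hf : f ∈ colorings V s c) : (fun v => f (σ v)) ∈ colorings V s c := by
  rw [mem_colorings] at hf ⊢
  intro j
  rw [← hf j]
  exact Finset.card_equiv σ (by simp)

def Pc (V : Type) [Fintype V] [DecidableEq V] (s : ℕ) (c : Fin s → ℕ) (i : Fin s)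
    (S : Finset V) : ℕ :=
  ((colorings V s c).filter fun f => ∀ v ∈ S, f v = i).card

lemma Pc_congr {c : Fin s → ℕ} {i : Fin s} {S T : Finset V} (h : S.card = T.card) :
    Pc V s c i S = Pc V s c i T := by
  classical
  have hc : Fintype.card {x // x ∈ S} = Fintype.card {x // x ∈ T} := by
    simpa using h
  have hc' : Fintype.card {x // ¬x ∈ S} = Fintype.card {x // ¬x ∈ T} := by
    rw [Fintype.card_subtype_compl, Fintype.card_subtype_compl, hc]
  set σ : Equiv.Perm V :=
    Equiv.subtypeCongr (Fintype.equivOfCardEq hc) (Fintype.equivOfCardEq hc') with hσ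
  have hmem : ∀ x : V, x ∈ S ↔ σ x ∈ T := by
    intro x
    constructor
    · intro hx
      have : σ x = ((Fintype.equivOfCardEq hc) ⟨x, hx⟩ : V) := by
        simp [hσ, Equiv.subtypeCongr, hx]
      rw [this]; exact Subtype.prop _
    · intro hx
      by_contra hxs
      have : σ x = ((Fintype.equivOfCardEq hc') ⟨x, hxs⟩ : V) := by
        simp [hσ, Equiv.subtypeCongr, hxs]
      rw [this] at hx
      exact (Subtype.prop ((Fintype.equivOfCardEq hc') ⟨x, hxs⟩)) hx
  unfold Pc
  apply Finset.card_equiv (Equiv.arrowCongr σ (Equiv.refl (Fin s)))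
  intro f
  have happ : ∀ f : V → Fin s, (Equiv.arrowCongr σ (Equiv.refl (Fin s))) f
      = fun v => f (σ.symm v) := by intro f; rfl
  simp only [mem_filter, happ]
  constructor
  · rintro ⟨h1, h2⟩
    refine ⟨comp_perm_mem σ.symm h1, fun v hv => h2 _ ?_⟩
    rw [hmem (σ.symm v)]; simpa using hv
  · rintro ⟨h1, h2⟩
    have := comp_perm_mem σ h1
    refine ⟨by simpa using this, fun v hv => ?_⟩
    have := h2 (σ v) (by rwa [← hmem v])
    simpa using this


lemma Pc_step (c : Fin s → ℕ) (i : Fin s) (S : Finset V) :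
    ∑ v ∈ Sᶜ, Pc V s c i (insert v S) = (c i - S.card) * Pc V s c i S := by
  classical
  have h1 : ∀ v : V, Pc V s c i (insert v S)
      = ∑ f ∈ (colorings V s c).filter (fun f => ∀ u ∈ S, f u = i),
          if f v = i then 1 else 0 := by
    intro v
    rw [← Finset.card_filter]
    unfold Pc
    rw [Finset.filter_filter]
    congr 1
    apply Finset.filter_congr
    intro f _
    rw [Finset.forall_mem_insert]
    tauto
  simp only [h1]
  rw [Finset.sum_comm]
  have h2 : ∀ f ∈ (colorings V s c).filter (fun f => ∀ u ∈ S, f u = i),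
      (∑ v ∈ Sᶜ, if f v = i then (1:ℕ) else 0) = c i - S.card := by
    intro f hf
    rw [Finset.mem_filter] at hf
    rw [Finset.sum_boole]  -- might be ℕ ok? sum_boole is for semirings, ℕ fine
    have h3 : (Sᶜ.filter fun v => f v = i) = (univ.filter fun v => f v = i) \ S := by
      ext v; simp [And.comm]
    rw [h3, Finset.card_sdiff_of_subset (fun v hv => by simp [hf.2 v hv]),
      mem_colorings.mp hf.1 i]
    simp
  rw [Finset.sum_congr rfl h2, Finset.sum_const, smul_eq_mul, mul_comm]
  rfl

lemma Pc_mul (c : Fin s → ℕ) (i : Fin s) (S : Finset V) :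
    Pc V s c i S * (Fintype.card V).descFactorial S.card
      = (colorings V s c).card * (c i).descFactorial S.card := by
  classical
  induction S using Finset.induction_on with
  | empty => simp [Pc]
  | @insert v S hv ih =>
    have hcard : (insert v S).card = S.card + 1 := Finset.card_insert_of_notMem hv
    have hkn : S.card + 1 ≤ Fintype.card V := by
      rw [← hcard, ← Finset.card_univ]; exact Finset.card_le_univ _
    have hstep : (Fintype.card V - S.card) * Pc V s c i (insert v S)
        = (c i - S.card) * Pc V s c i S := by
      rw [← Pc_step c i S]
      have : ∀ w ∈ Sᶜ, Pc V s c i (insert w S) = Pc V s c i (insert v S) := by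
        intro w hw
        exact Pc_congr (by
          rw [Finset.card_insert_of_notMem (Finset.mem_compl.mp hw), hcard])
      rw [Finset.sum_congr rfl this, Finset.sum_const, smul_eq_mul, Finset.card_compl]
    rw [hcard, Nat.descFactorial_succ, Nat.descFactorial_succ]
    calc Pc V s c i (insert v S) * ((Fintype.card V - S.card) * (Fintype.card V).descFactorial S.card)
        = ((Fintype.card V - S.card) * Pc V s c i (insert v S)) * (Fintype.card V).descFactorial S.card := by ring
      _ = ((c i - S.card) * Pc V s c i S) * (Fintype.card V).descFactorial S.card := by rw [hstep]
      _ = (c i - S.card) * (Pc V s c i S * (Fintype.card V).descFactorial S.card) := by ring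
      _ = (c i - S.card) * ((colorings V s c).card * (c i).descFactorial S.card) := by rw [ih]
      _ = (colorings V s c).card * ((c i - S.card) * (c i).descFactorial S.card) := by ring

lemma colorings_nonempty (c : Fin s → ℕ) (hsum : ∑ j, c j = Fintype.card V) :
    (colorings V s c).Nonempty := by
  classical
  have hcard : Fintype.card V = Fintype.card (Σ j : Fin s, Fin (c j)) := by
    simp [hsum.symm]
  obtain e := Fintype.equivOfCardEq hcard
  refine ⟨fun v => (e v).1, ?_⟩
  rw [mem_colorings]
  intro j
  have h1 : (univ.filter fun v => (e v).1 = j).card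
      = (univ.filter fun x : Σ j', Fin (c j') => x.1 = j).card :=
    Finset.card_equiv e (by simp)
  rw [h1]
  have h2 : (univ.filter fun x : Σ j', Fin (c j') => x.1 = j)
      = (univ : Finset (Fin (c j))).image (fun y => (⟨j, y⟩ : Σ j', Fin (c j'))) := by
    ext x
    simp only [mem_filter, mem_univ, true_and, mem_image]
    constructor
    · rintro rfl'
      · obtain ⟨a, b⟩ := x
        cases rfl'
        exact ⟨b, by simp⟩
    · rintro ⟨y, rfl⟩; rfl
  rw [h2, Finset.card_image_of_injective _ sigma_mk_injective, Finset.card_univ,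
    Fintype.card_fin]


def esupp (e : Sym2 V) : Finset V := univ.filter (· ∈ e)

@[simp] lemma mem_esupp {v : V} {e : Sym2 V} : v ∈ esupp e ↔ v ∈ e := by simp [esupp]

lemma esupp_pair (a b : V) : esupp s(a, b) = {a, b} := by
  ext x; simp [Sym2.mem_iff]

lemma esupp_card {e : Sym2 V} (he : ¬e.IsDiag) : (esupp e).card = 2 := by
  induction e using Sym2.ind with
  | _ a b =>
    rw [esupp_pair, Finset.card_pair]
    exact fun h => he (by simp [h])

lemma esupp_inj {e e' : Sym2 V} (hd : ¬e.IsDiag) (hd' : ¬e'.IsDiag)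
    (h : esupp e = esupp e') : e = e' := by
  induction e using Sym2.ind with
  | _ a b =>
    induction e' using Sym2.ind with
    | _ a' b' =>
      rw [esupp_pair, esupp_pair] at h
      have hab : a ≠ b := fun hh => hd (by simp [hh])
      have ha : a ∈ ({a', b'} : Finset V) := by rw [← h]; simp
      have hb : b ∈ ({a', b'} : Finset V) := by rw [← h]; simp
      simp only [mem_insert, mem_singleton] at ha hb
      have hab' : a' ≠ b' := fun hh => hd' (by simp [hh])
      rw [Sym2.eq_iff]
      rcases ha with rfl | rfl <;> rcases hb with h2 | h2 <;> tauto

lemma mono_iff {f : V → Fin s} {i : Fin s} {e : Sym2 V} :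
    Sym2.map f e = Sym2.diag i ↔ ∀ v ∈ esupp e, f v = i := by
  induction e using Sym2.ind with
  | _ a b =>
    simp only [Sym2.map_pair_eq, Sym2.diag, Sym2.eq_iff, esupp_pair, mem_insert, mem_singleton]
    constructor
    · rintro (⟨h1, h2⟩ | ⟨h1, h2⟩) v (rfl | rfl) <;> assumption
    · intro h
      exact Or.inl ⟨h a (Or.inl rfl), h b (Or.inr rfl)⟩

lemma inter_card_le {e e' : Sym2 V} (hd : ¬e.IsDiag) (hd' : ¬e'.IsDiag) (hne : e ≠ e') :
    (esupp e ∩ esupp e').card ≤ 1 := by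
  by_contra h
  push_neg at h
  have hle : (esupp e).card ≤ (esupp e ∩ esupp e').card := by rw [esupp_card hd]; omega
  have hle' : (esupp e').card ≤ (esupp e ∩ esupp e').card := by rw [esupp_card hd']; omega
  have h1 := Finset.eq_of_subset_of_card_le (Finset.inter_subset_left
    (s₁ := esupp e) (s₂ := esupp e')) hle
  have h2 := Finset.eq_of_subset_of_card_le (Finset.inter_subset_right
    (s₁ := esupp e) (s₂ := esupp e')) hle'
  exact hne (esupp_inj hd hd' (h1.symm.trans h2))

lemma union_card_of_adj {e e' : Sym2 V} (hd : ¬e.IsDiag) (hd' : ¬e'.IsDiag) (hne : e ≠ e')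
    (hadj : (esupp e ∩ esupp e').Nonempty) : (esupp e ∪ esupp e').card = 3 := by
  have h1 := Finset.card_union_add_card_inter (esupp e) (esupp e')
  have h2 : (esupp e ∩ esupp e').card = 1 :=
    le_antisymm (inter_card_le hd hd' hne) (Finset.card_pos.mpr hadj)
  rw [esupp_card hd, esupp_card hd', h2] at h1
  omega

lemma union_card_of_dis {e e' : Sym2 V} (hd : ¬e.IsDiag) (hd' : ¬e'.IsDiag)
    (hadj : ¬(esupp e ∩ esupp e').Nonempty) : (esupp e ∪ esupp e').card = 4 := by
  have h1 := Finset.card_union_add_card_inter (esupp e) (esupp e')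
  rw [Finset.not_nonempty_iff_eq_empty] at hadj
  rw [esupp_card hd, esupp_card hd', hadj] at h1
  simpa using h1

lemma two_mul_choose_two (d : ℕ) : d * d - d = 2 * d.choose 2 := by
  induction d with
  | zero => rfl
  | succ k ih =>
    have hkk : k ≤ k * k := by
      cases k with
      | zero => simp
      | succ t => exact Nat.le_mul_of_pos_left _ (Nat.succ_pos t)
    have hsq : (k + 1) * (k + 1) = k * k + k + k + 1 := by ring
    rw [Nat.choose_succ_succ, Nat.choose_one_right]
    have h2 : k.choose (Nat.succ 1) = k.choose 2 := rfl
    omega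

lemma sq_card (m : ℕ) : m * m = m + 2 * m.choose 2 := by
  have h1 := two_mul_choose_two m
  have hkk : m ≤ m * m := by
    cases m with
    | zero => simp
    | succ t => exact Nat.le_mul_of_pos_left _ (Nat.succ_pos t)
  omega

variable (G : SimpleGraph V) [DecidableRel G.Adj]


lemma card_diag_pairs :
    ((G.edgeFinset ×ˢ G.edgeFinset).filter fun p => p.1 = p.2).card = G.edgeFinset.card := by
  have h : ((G.edgeFinset ×ˢ G.edgeFinset).filter fun p => p.1 = p.2)
      = G.edgeFinset.image (fun e => (e, e)) := by
    ext p
    simp only [mem_filter, mem_product, mem_image]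
    constructor
    · rintro ⟨⟨h1, h2⟩, h3⟩
      exact ⟨p.1, h1, by cases p; cases h3; rfl⟩
    · rintro ⟨e, he, rfl⟩
      exact ⟨⟨he, he⟩, rfl⟩
  rw [h, Finset.card_image_of_injective _ (fun a b hab => congrArg Prod.fst hab)]

lemma card_adj_pairs :
    (((G.edgeFinset ×ˢ G.edgeFinset).filter fun p => ¬p.1 = p.2).filter
        fun p => (esupp p.1 ∩ esupp p.2).Nonempty).card
      = ∑ v : V, (G.degree v * G.degree v - G.degree v) := by
  classical
  have key : ((univ : Finset V).sigma fun v => (G.incidenceFinset v).offDiag).card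
      = (((G.edgeFinset ×ˢ G.edgeFinset).filter fun p => ¬p.1 = p.2).filter
          fun p => (esupp p.1 ∩ esupp p.2).Nonempty).card := by
    apply Finset.card_bij (fun x _ => x.2)
    · rintro ⟨v, p⟩ hx
      simp only [Finset.mem_sigma, Finset.mem_offDiag, mem_univ, true_and,
        SimpleGraph.mem_incidenceFinset, SimpleGraph.incidenceSet, Set.mem_setOf_eq] at hx
      obtain ⟨⟨h1e, h1v⟩, ⟨h2e, h2v⟩, hne⟩ := hx
      simp only [mem_filter, mem_product, SimpleGraph.mem_edgeFinset]
      exact ⟨⟨⟨h1e, h2e⟩, hne⟩, ⟨v, by simp [Finset.mem_inter, h1v, h2v]⟩⟩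
    · rintro ⟨v, p⟩ hx ⟨w, q⟩ hy h
      simp only at h
      subst h
      simp only [Finset.mem_sigma, Finset.mem_offDiag, mem_univ, true_and,
        SimpleGraph.mem_incidenceFinset, SimpleGraph.incidenceSet, Set.mem_setOf_eq] at hx hy
      obtain ⟨⟨h1e, h1v⟩, ⟨h2e, h2v⟩, hne⟩ := hx
      obtain ⟨⟨g1e, g1v⟩, ⟨g2e, g2v⟩, _⟩ := hy
      congr 1
      by_contra hvw
      exact hne (Sym2.eq_of_ne_mem hvw h1v g1v h2v g2v)
    · rintro p hp
      simp only [mem_filter, mem_product, SimpleGraph.mem_edgeFinset] at hp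
      obtain ⟨⟨⟨h1, h2⟩, hne⟩, v, hv⟩ := hp
      simp only [Finset.mem_inter, mem_esupp] at hv
      refine ⟨⟨v, p⟩, ?_, rfl⟩
      simp only [Finset.mem_sigma, Finset.mem_offDiag, mem_univ, true_and,
        SimpleGraph.mem_incidenceFinset, SimpleGraph.incidenceSet, Set.mem_setOf_eq]
      exact ⟨⟨h1, hv.1⟩, ⟨h2, hv.2⟩, hne⟩
  rw [← key, Finset.card_sigma]
  apply Finset.sum_congr rfl
  intro v _
  rw [Finset.offDiag_card, SimpleGraph.card_incidenceFinset_eq_degree]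

end VarAux


open VarAux in
/-- Theorem 1.1: under a uniform random `c`-coloring, the variance of the number
`M^{i,i}` of monochromatic edges of color `i` equals
`m (cᵢ^(2)/n^(2))(1 - m cᵢ^(2)/n^(2)) +
 2[(cᵢ^(3)/n^(3) - cᵢ^(4)/n^(4)) π₃(G) + (cᵢ^(4)/n^(4)) (m choose 2)]`,
where `π₃(G) = Σ_v (deg v choose 2)` is the number of `P₃`'s of `G`. -/
theorem variance_mono_edges (V : Type) [Fintype V] [DecidableEq V]
    (G : SimpleGraph V) [DecidableRel G.Adj] (n m p3 s : ℕ)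
    (hn : Fintype.card V = n) (hm : G.edgeFinset.card = m)
    (hp3 : p3 = ∑ v : V, (G.degree v).choose 2)
    (c : Fin s → ℕ) (hpos : ∀ i, 0 < c i) (hsum : ∑ i, c i = n) (i : Fin s) :
    (∑ f ∈ colorings V s c, (monoEdges V G s i f : ℚ) ^ 2) /
          ((colorings V s c).card : ℚ) -
        ((∑ f ∈ colorings V s c, (monoEdges V G s i f : ℚ)) /
          ((colorings V s c).card : ℚ)) ^ 2
      = (m : ℚ) * (((c i).descFactorial 2 : ℚ) / (n.descFactorial 2 : ℚ)) *
          (1 - (m : ℚ) * (((c i).descFactorial 2 : ℚ) / (n.descFactorial 2 : ℚ)))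
        + 2 * ((((c i).descFactorial 3 : ℚ) / (n.descFactorial 3 : ℚ)
                - ((c i).descFactorial 4 : ℚ) / (n.descFactorial 4 : ℚ)) * (p3 : ℚ)
              + (((c i).descFactorial 4 : ℚ) / (n.descFactorial 4 : ℚ)) *
                  (m.choose 2 : ℚ)) := by
  classical
  subst hn hm hp3
  set N : ℚ := ((colorings V s c).card : ℚ) with hN
  have hN0 : N ≠ 0 := by
    rw [hN, Nat.cast_ne_zero]
    exact Finset.card_ne_zero.mpr (colorings_nonempty c hsum)
  -- value of Pc in ℚ
  have hQ : ∀ U : Finset V, ((Pc V s c i U : ℕ) : ℚ)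
      = N * (((c i).descFactorial U.card : ℚ) /
          (((Fintype.card V).descFactorial U.card : ℚ))) := by
    intro U
    have h1 := Pc_mul c i U
    have h2 : (((Fintype.card V).descFactorial U.card : ℚ)) ≠ 0 := by
      rw [Nat.cast_ne_zero]
      intro h
      rw [Nat.descFactorial_eq_zero_iff_lt] at h
      have := Finset.card_le_univ U
      omega
    rw [hN, ← mul_div_assoc, eq_div_iff h2]
    exact_mod_cast h1
  -- expansion of monoEdges
  have hM1 : ∀ f : V → Fin s, (monoEdges V G s i f : ℚ)
      = ∑ e ∈ G.edgeFinset, if Sym2.map f e = Sym2.diag i then (1 : ℚ) else 0 := by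
    intro f
    unfold monoEdges
    rw [Finset.natCast_card_filter]
  -- first moment
  have hS1 : ∑ f ∈ colorings V s c, (monoEdges V G s i f : ℚ)
      = (G.edgeFinset.card : ℚ) *
        (N * (((c i).descFactorial 2 : ℚ) / (((Fintype.card V).descFactorial 2 : ℚ)))) := by
    rw [Finset.sum_congr rfl fun f _ => hM1 f, Finset.sum_comm]
    have hterm : ∀ e ∈ G.edgeFinset,
        (∑ f ∈ colorings V s c, if Sym2.map f e = Sym2.diag i then (1 : ℚ) else 0)
        = N * (((c i).descFactorial 2 : ℚ) / (((Fintype.card V).descFactorial 2 : ℚ))) := by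
      intro e he
      rw [Finset.sum_boole]
      have hfc : ((colorings V s c).filter fun f => Sym2.map f e = Sym2.diag i)
          = ((colorings V s c).filter fun f => ∀ v ∈ esupp e, f v = i) :=
        Finset.filter_congr fun f _ => mono_iff
      rw [hfc]
      have hcard2 : (esupp e).card = 2 :=
        esupp_card (G.not_isDiag_of_mem_edgeSet (SimpleGraph.mem_edgeFinset.mp he))
      have hq := hQ (esupp e)
      rw [hcard2] at hq
      exact hq
    rw [Finset.sum_congr rfl hterm, Finset.sum_const, nsmul_eq_mul]
  -- second moment expansion
  have hM2 : ∀ f : V → Fin s, (monoEdges V G s i f : ℚ) ^ 2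
      = ∑ p ∈ G.edgeFinset ×ˢ G.edgeFinset,
          if (∀ v ∈ esupp p.1 ∪ esupp p.2, f v = i) then (1 : ℚ) else 0 := by
    intro f
    rw [hM1, sq, Finset.sum_mul_sum, ← Finset.sum_product']
    apply Finset.sum_congr rfl
    intro p _
    have hiff : (∀ v ∈ esupp p.1 ∪ esupp p.2, f v = i)
        ↔ (Sym2.map f p.1 = Sym2.diag i ∧ Sym2.map f p.2 = Sym2.diag i) := by
      rw [Finset.forall_mem_union, ← mono_iff, ← mono_iff]
    rw [if_congr hiff rfl rfl]
    by_cases h1 : Sym2.map f p.1 = Sym2.diag i <;>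
      by_cases h2 : Sym2.map f p.2 = Sym2.diag i <;>
      simp [h1, h2]
  have hS2 : ∑ f ∈ colorings V s c, (monoEdges V G s i f : ℚ) ^ 2
      = ∑ p ∈ G.edgeFinset ×ˢ G.edgeFinset,
          ((((colorings V s c).filter fun f => ∀ v ∈ esupp p.1 ∪ esupp p.2, f v = i).card : ℕ) : ℚ) := by
    rw [Finset.sum_congr rfl fun f _ => hM2 f, Finset.sum_comm]
    exact Finset.sum_congr rfl fun p _ => by rw [Finset.sum_boole]
  -- per-pair evaluation
  have hg : ∀ (p : Sym2 V × Sym2 V) (k : ℕ), (esupp p.1 ∪ esupp p.2).card = k →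
      ((((colorings V s c).filter fun f => ∀ v ∈ esupp p.1 ∪ esupp p.2, f v = i).card : ℕ) : ℚ)
        = N * (((c i).descFactorial k : ℚ) / (((Fintype.card V).descFactorial k : ℚ))) := by
    intro p k hk
    have hq := hQ (esupp p.1 ∪ esupp p.2)
    rw [hk] at hq
    exact hq
  have hnd : ∀ p : Sym2 V × Sym2 V, p ∈ G.edgeFinset ×ˢ G.edgeFinset →
      ¬p.1.IsDiag ∧ ¬p.2.IsDiag := by
    intro p hp
    rw [Finset.mem_product] at hp
    exact ⟨G.not_isDiag_of_mem_edgeSet (SimpleGraph.mem_edgeFinset.mp hp.1),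
      G.not_isDiag_of_mem_edgeSet (SimpleGraph.mem_edgeFinset.mp hp.2)⟩
  -- sum over the diagonal class
  have hDgsum : ∑ p ∈ (G.edgeFinset ×ˢ G.edgeFinset).filter (fun p => p.1 = p.2),
      ((((colorings V s c).filter fun f => ∀ v ∈ esupp p.1 ∪ esupp p.2, f v = i).card : ℕ) : ℚ)
      = ((((G.edgeFinset ×ˢ G.edgeFinset).filter (fun p => p.1 = p.2)).card : ℕ) : ℚ)
        * (N * (((c i).descFactorial 2 : ℚ) / (((Fintype.card V).descFactorial 2 : ℚ)))) := by
    have h1 : ∀ p ∈ (G.edgeFinset ×ˢ G.edgeFinset).filter (fun p => p.1 = p.2),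
        ((((colorings V s c).filter fun f => ∀ v ∈ esupp p.1 ∪ esupp p.2, f v = i).card : ℕ) : ℚ)
        = N * (((c i).descFactorial 2 : ℚ) / (((Fintype.card V).descFactorial 2 : ℚ))) := by
      intro p hp
      rw [Finset.mem_filter] at hp
      refine hg p 2 ?_
      rw [← hp.2, Finset.union_self]
      exact esupp_card (hnd p hp.1).1
    rw [Finset.sum_congr rfl h1, Finset.sum_const, nsmul_eq_mul]
  -- sum over the adjacent class
  have hAjsum : ∑ p ∈ ((G.edgeFinset ×ˢ G.edgeFinset).filter (fun p => ¬p.1 = p.2)).filter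
        (fun p => (esupp p.1 ∩ esupp p.2).Nonempty),
      ((((colorings V s c).filter fun f => ∀ v ∈ esupp p.1 ∪ esupp p.2, f v = i).card : ℕ) : ℚ)
      = (((((G.edgeFinset ×ˢ G.edgeFinset).filter (fun p => ¬p.1 = p.2)).filter
        (fun p => (esupp p.1 ∩ esupp p.2).Nonempty)).card : ℕ) : ℚ)
        * (N * (((c i).descFactorial 3 : ℚ) / (((Fintype.card V).descFactorial 3 : ℚ)))) := by
    have h1 : ∀ p ∈ ((G.edgeFinset ×ˢ G.edgeFinset).filter (fun p => ¬p.1 = p.2)).filter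
        (fun p => (esupp p.1 ∩ esupp p.2).Nonempty),
        ((((colorings V s c).filter fun f => ∀ v ∈ esupp p.1 ∪ esupp p.2, f v = i).card : ℕ) : ℚ)
        = N * (((c i).descFactorial 3 : ℚ) / (((Fintype.card V).descFactorial 3 : ℚ))) := by
      intro p hp
      rw [Finset.mem_filter, Finset.mem_filter] at hp
      exact hg p 3 (union_card_of_adj (hnd p hp.1.1).1 (hnd p hp.1.1).2 hp.1.2 hp.2)
    rw [Finset.sum_congr rfl h1, Finset.sum_const, nsmul_eq_mul]
  -- sum over the disjoint class
  have hDssum : ∑ p ∈ ((G.edgeFinset ×ˢ G.edgeFinset).filter (fun p => ¬p.1 = p.2)).filter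
        (fun p => ¬(esupp p.1 ∩ esupp p.2).Nonempty),
      ((((colorings V s c).filter fun f => ∀ v ∈ esupp p.1 ∪ esupp p.2, f v = i).card : ℕ) : ℚ)
      = (((((G.edgeFinset ×ˢ G.edgeFinset).filter (fun p => ¬p.1 = p.2)).filter
        (fun p => ¬(esupp p.1 ∩ esupp p.2).Nonempty)).card : ℕ) : ℚ)
        * (N * (((c i).descFactorial 4 : ℚ) / (((Fintype.card V).descFactorial 4 : ℚ)))) := by
    have h1 : ∀ p ∈ ((G.edgeFinset ×ˢ G.edgeFinset).filter (fun p => ¬p.1 = p.2)).filter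
        (fun p => ¬(esupp p.1 ∩ esupp p.2).Nonempty),
        ((((colorings V s c).filter fun f => ∀ v ∈ esupp p.1 ∪ esupp p.2, f v = i).card : ℕ) : ℚ)
        = N * (((c i).descFactorial 4 : ℚ) / (((Fintype.card V).descFactorial 4 : ℚ))) := by
      intro p hp
      rw [Finset.mem_filter, Finset.mem_filter] at hp
      exact hg p 4 (union_card_of_dis (hnd p hp.1.1).1 (hnd p hp.1.1).2 hp.2)
    rw [Finset.sum_congr rfl h1, Finset.sum_const, nsmul_eq_mul]
  -- splitting of the pair sum
  have e1 := Finset.sum_filter_add_sum_filter_not (G.edgeFinset ×ˢ G.edgeFinset)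
    (fun p => p.1 = p.2)
    (fun p => ((((colorings V s c).filter fun f =>
        ∀ v ∈ esupp p.1 ∪ esupp p.2, f v = i).card : ℕ) : ℚ))
  have e2 := Finset.sum_filter_add_sum_filter_not
    ((G.edgeFinset ×ˢ G.edgeFinset).filter (fun p => ¬p.1 = p.2))
    (fun p => (esupp p.1 ∩ esupp p.2).Nonempty)
    (fun p => ((((colorings V s c).filter fun f =>
        ∀ v ∈ esupp p.1 ∪ esupp p.2, f v = i).card : ℕ) : ℚ))
  -- cardinalities of the classes
  have q3 : ((((G.edgeFinset ×ˢ G.edgeFinset).filter (fun p => p.1 = p.2)).card : ℕ) : ℚ)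
      = (G.edgeFinset.card : ℚ) := by
    exact_mod_cast congrArg (Nat.cast : ℕ → ℚ) (card_diag_pairs G)
  have q4nat : (((G.edgeFinset ×ˢ G.edgeFinset).filter (fun p => ¬p.1 = p.2)).filter
        (fun p => (esupp p.1 ∩ esupp p.2).Nonempty)).card
      = 2 * ∑ v : V, (G.degree v).choose 2 := by
    rw [card_adj_pairs G, Finset.mul_sum]
    exact Finset.sum_congr rfl fun v _ => two_mul_choose_two _
  have q4 : ((((G.edgeFinset ×ˢ G.edgeFinset).filter (fun p => ¬p.1 = p.2)).filter
        (fun p => (esupp p.1 ∩ esupp p.2).Nonempty)).card : ℚ)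
      = 2 * ((∑ v : V, (G.degree v).choose 2 : ℕ) : ℚ) := by
    exact_mod_cast congrArg (Nat.cast : ℕ → ℚ) q4nat
  have hpc1 : ((G.edgeFinset ×ˢ G.edgeFinset).filter (fun p => p.1 = p.2)).card
      + ((G.edgeFinset ×ˢ G.edgeFinset).filter (fun p => ¬p.1 = p.2)).card
      = G.edgeFinset.card * G.edgeFinset.card := by
    rw [Finset.card_filter_add_card_filter_not, Finset.card_product]
  have hpc2 : (((G.edgeFinset ×ˢ G.edgeFinset).filter (fun p => ¬p.1 = p.2)).filter
        (fun p => (esupp p.1 ∩ esupp p.2).Nonempty)).card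
      + (((G.edgeFinset ×ˢ G.edgeFinset).filter (fun p => ¬p.1 = p.2)).filter
        (fun p => ¬(esupp p.1 ∩ esupp p.2).Nonempty)).card
      = ((G.edgeFinset ×ˢ G.edgeFinset).filter (fun p => ¬p.1 = p.2)).card := by
    rw [Finset.card_filter_add_card_filter_not]
  have hsqm := sq_card G.edgeFinset.card
  have q5 : ((((G.edgeFinset ×ˢ G.edgeFinset).filter (fun p => ¬p.1 = p.2)).filter
        (fun p => ¬(esupp p.1 ∩ esupp p.2).Nonempty)).card : ℚ)
      = 2 * ((G.edgeFinset.card.choose 2 : ℕ) : ℚ)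
        - 2 * ((∑ v : V, (G.degree v).choose 2 : ℕ) : ℚ) := by
    have c1 : (((G.edgeFinset ×ˢ G.edgeFinset).filter (fun p => p.1 = p.2)).card : ℚ)
        + (((G.edgeFinset ×ˢ G.edgeFinset).filter (fun p => ¬p.1 = p.2)).card : ℚ)
        = (G.edgeFinset.card : ℚ) * (G.edgeFinset.card : ℚ) := by exact_mod_cast hpc1
    have c2 : ((((G.edgeFinset ×ˢ G.edgeFinset).filter (fun p => ¬p.1 = p.2)).filter
          (fun p => (esupp p.1 ∩ esupp p.2).Nonempty)).card : ℚ)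
        + ((((G.edgeFinset ×ˢ G.edgeFinset).filter (fun p => ¬p.1 = p.2)).filter
          (fun p => ¬(esupp p.1 ∩ esupp p.2).Nonempty)).card : ℚ)
        = (((G.edgeFinset ×ˢ G.edgeFinset).filter (fun p => ¬p.1 = p.2)).card : ℚ) := by
      exact_mod_cast hpc2
    have c3 : (G.edgeFinset.card : ℚ) * (G.edgeFinset.card : ℚ)
        = (G.edgeFinset.card : ℚ) + 2 * ((G.edgeFinset.card.choose 2 : ℕ) : ℚ) := by
      exact_mod_cast hsqm
    linarith [q3, q4, c1, c2, c3]
  -- final assembly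
  rw [hS1, hS2]
  have hsplit : ∑ p ∈ G.edgeFinset ×ˢ G.edgeFinset,
      ((((colorings V s c).filter fun f => ∀ v ∈ esupp p.1 ∪ esupp p.2, f v = i).card : ℕ) : ℚ)
      = (∑ p ∈ (G.edgeFinset ×ˢ G.edgeFinset).filter (fun p => p.1 = p.2),
          ((((colorings V s c).filter fun f => ∀ v ∈ esupp p.1 ∪ esupp p.2, f v = i).card : ℕ) : ℚ))
        + ((∑ p ∈ ((G.edgeFinset ×ˢ G.edgeFinset).filter (fun p => ¬p.1 = p.2)).filter
            (fun p => (esupp p.1 ∩ esupp p.2).Nonempty),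
          ((((colorings V s c).filter fun f => ∀ v ∈ esupp p.1 ∪ esupp p.2, f v = i).card : ℕ) : ℚ))
          + (∑ p ∈ ((G.edgeFinset ×ˢ G.edgeFinset).filter (fun p => ¬p.1 = p.2)).filter
            (fun p => ¬(esupp p.1 ∩ esupp p.2).Nonempty),
          ((((colorings V s c).filter fun f => ∀ v ∈ esupp p.1 ∪ esupp p.2, f v = i).card : ℕ) : ℚ))) := by
    linarith [e1, e2]
  rw [hsplit, hDgsum, hAjsum, hDssum, q3, q4, q5]
  have hNx : ∀ x y : ℚ, (x * (N * y)) / N = x * y := by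
    intro x y
    field_simp
  rw [add_div, add_div, hNx, hNx, hNx]
  ring
end

section
/- Let G be a finite simple graph with m edges, n vertices, and π_3(G) copies of P_3. Under a uniform random c-coloring F, for distinct colors i ≠ j, the variance of M^{i,j}, the number of edges with one endpoint colored i and the other colored j, equals 2m (c_i c_j / n^{\underline{2}})(1 - 2m c_i c_j / n^{\underline{2}}) + 2[ ((c_i c_j^{\underline{2}} + c_i^{\underline{2}} c_j)/n^{\underline{3}} - 4 c_i^{\underline{2}} c_j^{\underline{2}}/n^{\underline{4}}) π_3(G) + 4 (c_i^{\underline{2}} c_j^{\underline{2}}/n^{\underline{4}}) (m choose 2) ]. -/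
/-- `M^{i,j} f` : the number of edges of `G` with one endpoint colored `i` and
the other colored `j`. -/
def biEdges (V : Type) [Fintype V] [DecidableEq V] (G : SimpleGraph V)
    [DecidableRel G.Adj] (s : ℕ) (i j : Fin s) (f : V → Fin s) : ℕ :=
  (G.edgeFinset.filter fun e => Sym2.map f e = s(i, j)).card

/-!
Write `M^{i,j}` as the number of darts `d` with `F d.fst = i` and `F d.snd = j`, so that its first
moment is a sum over darts and its second moment a sum over ordered pairs of darts. Since the
uniform `c`-coloring is invariant under permutations of `V`, double counting pairs of a coloring
and an injective tuple shows that `k` distinct vertices receive prescribed colors `a` with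
probability `∏ₗ c_l^{(|a⁻¹ l|)} / n^{(k)}`. For a pair of darts this depends only on how the two
darts overlap: equal (`cᵢ c_j / n^{(2)}`), common tail (`cᵢ c_j^{(2)} / n^{(3)}`), common head
(`cᵢ^{(2)} c_j / n^{(3)}`), the head of one at the tail of the other (`0`), or vertex-disjoint
(`cᵢ^{(2)} c_j^{(2)} / n^{(4)}`). The numbers of pairs of each type are expressed through
`∑ deg² = 2 π₃ + 2 m`, and the variance formula is then an identity of rational functions.
-/

open Finset Function

section Counting

variable {α β γ : Type} [Fintype α] [Fintype β] [Fintype γ]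

theorem card_filter_prod_eq_sum_mul [DecidableEq γ] (φ : α → γ) (ψ : β → γ) :
    #{x : α × β | φ x.1 = ψ x.2} = ∑ u, #{a | φ a = u} * #{b | ψ b = u} := by
  rw [card_eq_sum_card_fiberwise (f := fun x => φ x.1) (t := univ) (by simp)]
  refine sum_congr rfl fun u _ => ?_
  rw [← card_product]
  congr 1
  ext ⟨a, b⟩
  simp only [mem_filter, mem_univ, true_and, mem_product]
  constructor
  · rintro ⟨h, rfl⟩; exact ⟨rfl, h.symm⟩
  · rintro ⟨rfl, h⟩; exact ⟨h.symm, rfl⟩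

theorem card_filter_snd_eq_apply_fst [DecidableEq β] (g : α → β) :
    #{x : α × β | x.2 = g x.1} = Fintype.card α :=
  card_nbij' Prod.fst (fun a => (a, g a)) (by simp) (by simp)
    (fun x hx => Prod.ext rfl (by simp_all)) (fun _ _ => rfl)

theorem card_filter_diag [DecidableEq α] : #{x : α × α | x.1 = x.2} = Fintype.card α := by
  rw [← card_filter_snd_eq_apply_fst id]
  simp only [id, eq_comm]

theorem card_filter_and_ne_add_card [DecidableEq α] {P : α × α → Prop} [DecidablePred P]
    (hP : ∀ a, P (a, a)) : #{x | P x ∧ x.1 ≠ x.2} + Fintype.card α = #{x | P x} := by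
  rw [← card_filter_diag, ← card_filter_add_card_filter_not (s := {x | P x})
    (fun x => x.1 ≠ x.2), filter_filter, filter_filter]
  congr 2
  ext ⟨a, b⟩
  simp only [mem_filter, mem_univ, true_and, not_not]
  constructor
  · rintro rfl; exact ⟨hP _, rfl⟩
  · rintro ⟨-, rfl⟩; rfl

theorem sum_card_filter_sq {δ : Type} (K : Finset δ) (P : α → δ → Prop)
    [∀ a f, Decidable (P a f)] :
    ∑ f ∈ K, #{a | P a f} ^ 2 = ∑ x : α × α, #{f ∈ K | P x.1 f ∧ P x.2 f} := by
  simp_rw [sq, ← card_product, ← filter_product, univ_product_univ]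
  exact sum_card_bipartiteAbove_eq_sum_card_bipartiteBelow
    (fun f (x : α × α) => P x.1 f ∧ P x.2 f)

end Counting

section Colorings

variable {V : Type} [Fintype V] [DecidableEq V] {s : ℕ} {c : Fin s → ℕ}

theorem mem_colorings {f : V → Fin s} :
    f ∈ colorings V s c ↔ ∀ i, #{v | f v = i} = c i := by
  simp [colorings]

theorem comp_perm_mem_colorings {f : V → Fin s} (hf : f ∈ colorings V s c)
    (σ : Equiv.Perm V) : f ∘ σ ∈ colorings V s c := by
  rw [mem_colorings] at hf ⊢
  intro i
  rw [← hf i]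
  exact card_bijective σ σ.bijective (by simp)

theorem colorings_nonempty (hc : ∑ i, c i = Fintype.card V) : (colorings V s c).Nonempty := by
  obtain ⟨e⟩ : Nonempty (V ≃ Σ i, Fin (c i)) :=
    Fintype.card_eq.1 (by simp [hc])
  refine ⟨fun v => (e v).1, mem_colorings.2 fun i => ?_⟩
  rw [card_bijective e e.bijective (t := {x | x.1 = i}) (by simp), ← Fintype.card_subtype,
    Fintype.card_congr (Equiv.sigmaSubtype i), Fintype.card_fin]

variable {ι : Type} [Fintype ι]

theorem card_filter_comp_eq_of_injective {v w : ι → V} (hv : Injective v) (hw : Injective w)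
    (a : ι → Fin s) :
    #{f ∈ colorings V s c | f ∘ v = a} = #{f ∈ colorings V s c | f ∘ w = a} := by
  obtain ⟨σ, hσ⟩ := Equiv.Perm.exists_extending_pair w v hw hv
  refine card_nbij' (· ∘ σ) (· ∘ σ.symm) ?_ ?_ (fun f _ => by ext; simp)
    (fun f _ => by ext; simp)
  · intro f hf
    simp only [coe_filter, Set.mem_ofPred_eq] at hf ⊢
    refine ⟨comp_perm_mem_colorings hf.1 σ, ?_⟩
    rw [← hf.2]
    ext t
    simp [hσ]
  · intro f hf
    simp only [coe_filter, Set.mem_ofPred_eq] at hf ⊢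
    refine ⟨comp_perm_mem_colorings hf.1 σ.symm, ?_⟩
    rw [← hf.2]
    ext t
    simp [← hσ]

def injectiveCompEquiv (f : V → Fin s) (a : ι → Fin s) :
    {w : ι → V // Injective w ∧ f ∘ w = a} ≃ ∀ l, {t // a t = l} ↪ {v // f v = l} where
  toFun w l := ⟨fun t => ⟨w.1 t, (congrFun w.2.2 t.1).trans t.2⟩,
    fun _ _ h => Subtype.ext (w.2.1 (congrArg Subtype.val h))⟩
  invFun g := by
    refine ⟨fun t => g (a t) ⟨t, rfl⟩, fun t t' h => ?_, funext fun t => (g (a t) ⟨t, rfl⟩).2⟩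
    beta_reduce at h
    have hl : a t' = a t := by
      rw [← (g (a t) ⟨t, rfl⟩).2, ← (g (a t') ⟨t', rfl⟩).2]
      exact congrArg f h.symm
    have hcast : ∀ l (ht' : a t' = l), (g l ⟨t', ht'⟩ : V) = g (a t') ⟨t', rfl⟩ := by
      rintro l rfl; rfl
    rw [← hcast _ hl] at h
    exact congrArg Subtype.val ((g (a t)).injective (Subtype.ext h))
  left_inv w := rfl
  right_inv g := by
    funext l
    ext ⟨t, rfl⟩
    rfl

theorem card_injective_comp_eq_prod [DecidableEq ι] {f : V → Fin s} (hf : f ∈ colorings V s c)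
    (a : ι → Fin s) :
    #{w : ι → V | Injective w ∧ f ∘ w = a} = ∏ l, (c l).descFactorial #{t | a t = l} := by
  rw [← Fintype.card_subtype, Fintype.card_congr (injectiveCompEquiv f a), Fintype.card_pi]
  refine prod_congr rfl fun l _ => ?_
  rw [Fintype.card_embedding_eq, Fintype.card_subtype, Fintype.card_subtype, mem_colorings.1 hf]

theorem card_colorings_filter_comp_mul_descFactorial [DecidableEq ι] {v : ι → V}
    (hv : Injective v) (a : ι → Fin s) :
    #{f ∈ colorings V s c | f ∘ v = a} * (Fintype.card V).descFactorial (Fintype.card ι) =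
      #(colorings V s c) * ∏ l, (c l).descFactorial #{t | a t = l} := by
  set W : Finset (ι → V) := {w | Injective w}
  have hW : #W = (Fintype.card V).descFactorial (Fintype.card ι) := by
    rw [← Fintype.card_subtype, Fintype.card_congr (Equiv.subtypeInjectiveEquivEmbedding ι V),
      Fintype.card_embedding_eq]
  have hdouble := sum_card_bipartiteAbove_eq_sum_card_bipartiteBelow
    (s := W) (t := colorings V s c) (r := fun w f => f ∘ w = a)
  simp only [bipartiteAbove, bipartiteBelow, W, filter_filter] at hdouble
  calc #{f ∈ colorings V s c | f ∘ v = a} * (Fintype.card V).descFactorial (Fintype.card ι)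
      = ∑ w ∈ W, #{f ∈ colorings V s c | f ∘ w = a} := by
        rw [sum_congr rfl fun w hw => card_filter_comp_eq_of_injective (mem_filter.1 hw).2 hv a,
          sum_const, smul_eq_mul, hW, mul_comm]
    _ = ∑ f ∈ colorings V s c, ∏ l, (c l).descFactorial #{t | a t = l} :=
        hdouble.trans (sum_congr rfl fun f hf => card_injective_comp_eq_prod hf a)
    _ = _ := by rw [sum_const, smul_eq_mul]

theorem prod_descFactorial_card_fiber_of_two_colors {a : ι → Fin s} {i j : Fin s} (hij : i ≠ j)
    (ha : ∀ t, a t = i ∨ a t = j) :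
    ∏ l, (c l).descFactorial #{t | a t = l} =
      (c i).descFactorial #{t | a t = i} * (c j).descFactorial #{t | a t = j} := by
  rw [← prod_pair (f := fun l => (c l).descFactorial #{t | a t = l}) hij]
  refine (prod_subset (subset_univ _) fun l _ hl => ?_).symm
  rw [filter_false_of_mem fun t _ hat => hl ?_, card_empty, Nat.descFactorial_zero]
  rcases ha t with h | h <;> simp [← hat, h]

theorem cast_card_colorings_filter_comp_of_two_colors [DecidableEq ι] {v : ι → V}
    (hv : Injective v) {a : ι → Fin s} {i j : Fin s} (hij : i ≠ j)
    (ha : ∀ t, a t = i ∨ a t = j) :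
    (#{f ∈ colorings V s c | f ∘ v = a} : ℚ) =
      #(colorings V s c) * ((c i).descFactorial #{t | a t = i} *
        (c j).descFactorial #{t | a t = j}) / (Fintype.card V).descFactorial (Fintype.card ι) := by
  have hn : (Fintype.card V).descFactorial (Fintype.card ι) ≠ 0 :=
    (Nat.descFactorial_pos.2 (Fintype.card_le_of_injective v hv)).ne'
  have h := card_colorings_filter_comp_mul_descFactorial (c := c) hv a
  rw [prod_descFactorial_card_fiber_of_two_colors hij ha] at h
  rw [eq_div_iff (by exact_mod_cast hn)]
  exact_mod_cast h

variable {i j : Fin s}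

theorem cast_card_colorings_filter_two (hij : i ≠ j) {u v : V} (huv : u ≠ v) :
    (#{f ∈ colorings V s c | f u = i ∧ f v = j} : ℚ) =
      #(colorings V s c) * (c i * c j) / (Fintype.card V).descFactorial 2 := by
  convert cast_card_colorings_filter_comp_of_two_colors (c := c) (v := ![u, v]) (a := ![i, j])
    (by simp [Injective, Fin.forall_fin_succ, huv, huv.symm]) hij (by simp [Fin.forall_fin_succ])
    using 4 <;>
  simp only [funext_iff, Fin.forall_fin_succ, card_filter, Fin.sum_univ_succ, Fin.sum_univ_zero,
    Fintype.card_fin] <;>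
  simp [hij, hij.symm]

theorem cast_card_colorings_filter_three_left (hij : i ≠ j) {u v w : V} (huv : u ≠ v)
    (huw : u ≠ w) (hvw : v ≠ w) :
    (#{f ∈ colorings V s c | f u = i ∧ f v = j ∧ f w = j} : ℚ) =
      #(colorings V s c) * (c i * (c j).descFactorial 2) / (Fintype.card V).descFactorial 3 := by
  convert cast_card_colorings_filter_comp_of_two_colors (c := c) (v := ![u, v, w])
    (a := ![i, j, j]) (by simp [Injective, Fin.forall_fin_succ, huv, huw, hvw, huv.symm,
      huw.symm, hvw.symm]) hij (by simp [Fin.forall_fin_succ])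
    using 4 <;>
  simp only [funext_iff, Fin.forall_fin_succ, card_filter, Fin.sum_univ_succ, Fin.sum_univ_zero,
    Fintype.card_fin] <;>
  simp [hij, hij.symm]

theorem cast_card_colorings_filter_three_right (hij : i ≠ j) {u v w : V} (huv : u ≠ v)
    (huw : u ≠ w) (hvw : v ≠ w) :
    (#{f ∈ colorings V s c | f u = i ∧ f v = i ∧ f w = j} : ℚ) =
      #(colorings V s c) * ((c i).descFactorial 2 * c j) / (Fintype.card V).descFactorial 3 := by
  convert cast_card_colorings_filter_comp_of_two_colors (c := c) (v := ![u, v, w])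
    (a := ![i, i, j]) (by simp [Injective, Fin.forall_fin_succ, huv, huw, hvw, huv.symm,
      huw.symm, hvw.symm]) hij (by simp [Fin.forall_fin_succ])
    using 4 <;>
  simp only [funext_iff, Fin.forall_fin_succ, card_filter, Fin.sum_univ_succ, Fin.sum_univ_zero,
    Fintype.card_fin] <;>
  simp [hij, hij.symm]

theorem cast_card_colorings_filter_four (hij : i ≠ j) {u v u' v' : V} (h₁ : u ≠ v)
    (h₂ : u ≠ u') (h₃ : u ≠ v') (h₄ : v ≠ u') (h₅ : v ≠ v') (h₆ : u' ≠ v') :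
    (#{f ∈ colorings V s c | f u = i ∧ f v = j ∧ f u' = i ∧ f v' = j} : ℚ) =
      #(colorings V s c) * ((c i).descFactorial 2 * (c j).descFactorial 2) /
        (Fintype.card V).descFactorial 4 := by
  convert cast_card_colorings_filter_comp_of_two_colors (c := c) (v := ![u, v, u', v'])
    (a := ![i, j, i, j]) (by simp [Injective, Fin.forall_fin_succ, h₁, h₂, h₃, h₄, h₅, h₆,
      h₁.symm, h₂.symm, h₃.symm, h₄.symm, h₅.symm, h₆.symm]) hij
    (by simp [Fin.forall_fin_succ])
    using 4 <;>
  simp only [funext_iff, Fin.forall_fin_succ, card_filter, Fin.sum_univ_succ, Fin.sum_univ_zero,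
    Fintype.card_fin] <;>
  simp [hij, hij.symm]

end Colorings

section Darts

variable {V : Type} [Fintype V] (G : SimpleGraph V) [DecidableRel G.Adj]

theorem sum_cast_degree_sq :
    ∑ u, (G.degree u : ℚ) ^ 2 = 2 * (∑ u, (G.degree u).choose 2 : ℕ) + 2 * #G.edgeFinset := by
  have hdeg : ∑ u, (G.degree u : ℚ) = 2 * #G.edgeFinset := by
    exact_mod_cast G.sum_degrees_eq_twice_card_edges
  rw [Nat.cast_sum, mul_sum, ← hdeg, ← sum_add_distrib]
  exact sum_congr rfl fun u _ => by rw [Nat.cast_choose_two]; ring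

variable [DecidableEq V]

theorem biEdges_eq_card_darts {s : ℕ} {i j : Fin s} (hij : i ≠ j) (f : V → Fin s) :
    biEdges V G s i j f = #{d : G.Dart | f d.fst = i ∧ f d.snd = j} := by
  refine (card_nbij (·.edge) (fun d hd => ?_) (fun d hd d' hd' h => ?_) fun e he => ?_).symm
  · simp only [coe_filter, mem_univ, true_and, Set.mem_ofPred_eq] at hd
    simp [SimpleGraph.Dart.edge, hd]
  · simp only [coe_filter, mem_univ, true_and, Set.mem_ofPred_eq] at hd hd'
    refine ((G.dart_edge_eq_iff d d').1 h).resolve_right fun hsymm => hij ?_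
    rw [← hd.1, ← hd'.2, hsymm, SimpleGraph.Dart.symm_toProd, Prod.fst_swap]
  · simp only [coe_filter, SimpleGraph.mem_edgeFinset, Set.mem_ofPred_eq] at he
    obtain ⟨he, hf⟩ := he
    induction e with
    | _ a b =>
      rw [Sym2.map_mk, Sym2.eq_iff] at hf
      rcases hf with ⟨ha, hb⟩ | ⟨ha, hb⟩
      · exact ⟨⟨(a, b), he⟩, by simp [ha, hb], rfl⟩
      · exact ⟨⟨(b, a), he.symm⟩, by simp [ha, hb], Sym2.eq_swap⟩

theorem card_dart_snd_fiber_eq_degree (v : V) : #{d : G.Dart | d.snd = v} = G.degree v := by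
  rw [← G.dart_fst_fiber_card_eq_degree v]
  exact card_bijective _ SimpleGraph.Dart.symm_involutive.bijective (by simp)

theorem card_dart_pairs_eq_sum_degree_sq {φ ψ : G.Dart → V} (hφ : ∀ u, #{d | φ d = u} = G.degree u)
    (hψ : ∀ u, #{d | ψ d = u} = G.degree u) :
    #{x : G.Dart × G.Dart | φ x.1 = ψ x.2} = ∑ u, G.degree u ^ 2 := by
  simp only [card_filter_prod_eq_sum_mul, hφ, hψ, sq]

theorem card_dart_pairs_crossed_add_card_dart :
    #{x : G.Dart × G.Dart | x.1.fst = x.2.snd ∨ x.1.snd = x.2.fst} + Fintype.card G.Dart =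
      2 * ∑ u, G.degree u ^ 2 := by
  have hinter : #{x : G.Dart × G.Dart | x.1.fst = x.2.snd ∧ x.1.snd = x.2.fst} =
      Fintype.card G.Dart := by
    rw [← card_filter_snd_eq_apply_fst SimpleGraph.Dart.symm]
    congr 1
    ext ⟨d, e⟩
    simp [SimpleGraph.Dart.ext_iff, Prod.ext_iff, eq_comm, and_comm]
  rw [filter_or, ← hinter, filter_and, card_union_add_card_inter, two_mul,
    card_dart_pairs_eq_sum_degree_sq G G.dart_fst_fiber_card_eq_degree
      (card_dart_snd_fiber_eq_degree G),
    card_dart_pairs_eq_sum_degree_sq G (card_dart_snd_fiber_eq_degree G)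
      G.dart_fst_fiber_card_eq_degree]

end Darts

section DartPairs

variable {V : Type} [DecidableEq V] {G : SimpleGraph V}

structure HasOverlapValues (F : G.Dart → G.Dart → ℚ) (q₂ q₃ q₃' q₄ : ℚ) : Prop where
  self : ∀ d, F d d = q₂
  fst_eq : ∀ d e : G.Dart, d.fst = e.fst → d.snd ≠ e.snd → F d e = q₃
  snd_eq : ∀ d e : G.Dart, d.snd = e.snd → d.fst ≠ e.fst → F d e = q₃'
  crossed : ∀ d e : G.Dart, d.fst = e.snd ∨ d.snd = e.fst → F d e = 0
  disjoint : ∀ d e : G.Dart, d.fst ≠ e.fst → d.fst ≠ e.snd → d.snd ≠ e.fst → d.snd ≠ e.snd →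
    F d e = q₄

namespace HasOverlapValues

variable {F : G.Dart → G.Dart → ℚ} {q₂ q₃ q₃' q₄ : ℚ}

-- The four overlap events are pairwise exclusive, and `F = q₄` off their union.
theorem eq_ite (hF : HasOverlapValues F q₂ q₃ q₃' q₄) (d e : G.Dart) :
    F d e = q₄ + (if d = e then q₂ - q₄ else 0) +
      (if d.fst = e.fst ∧ d ≠ e then q₃ - q₄ else 0) +
      (if d.snd = e.snd ∧ d ≠ e then q₃' - q₄ else 0) -
      (if d.fst = e.snd ∨ d.snd = e.fst then q₄ else 0) := by
  by_cases hde : d = e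
  · subst hde
    rw [hF.self, if_pos rfl, if_neg (by simp), if_neg (by simp),
      if_neg (by simp [d.fst_ne_snd, d.snd_ne_fst])]
    ring
  by_cases hfst : d.fst = e.fst
  · have hsnd : d.snd ≠ e.snd := fun h => hde (SimpleGraph.Dart.ext _ _ (Prod.ext hfst h))
    have hcross : ¬(d.fst = e.snd ∨ d.snd = e.fst) := by
      rw [hfst]
      rintro (h | h)
      exacts [e.fst_ne_snd h, d.snd_ne_fst (h.trans hfst.symm)]
    rw [hF.fst_eq d e hfst hsnd, if_neg hde, if_pos ⟨hfst, hde⟩, if_neg fun h => hsnd h.1,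
      if_neg hcross]
    ring
  by_cases hsnd : d.snd = e.snd
  · have hcross : ¬(d.fst = e.snd ∨ d.snd = e.fst) := by
      rw [hsnd]
      rintro (h | h)
      exacts [d.fst_ne_snd (h.trans hsnd.symm), e.snd_ne_fst h]
    rw [hF.snd_eq d e hsnd hfst, if_neg hde, if_neg fun h => hfst h.1, if_pos ⟨hsnd, hde⟩,
      if_neg hcross]
    ring
  by_cases hcross : d.fst = e.snd ∨ d.snd = e.fst
  · rw [hF.crossed d e hcross, if_neg hde, if_neg fun h => hfst h.1, if_neg fun h => hsnd h.1,
      if_pos hcross]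
    ring
  · simp only [not_or] at hcross
    rw [hF.disjoint d e hfst hcross.1 hcross.2 hsnd, if_neg hde, if_neg fun h => hfst h.1,
      if_neg fun h => hsnd h.1, if_neg (by tauto)]
    ring

variable [Fintype V] [DecidableRel G.Adj]

theorem sum_eq (hF : HasOverlapValues F q₂ q₃ q₃' q₄) :
    ∑ x : G.Dart × G.Dart, F x.1 x.2 =
      Fintype.card G.Dart * q₂ +
        (∑ u, (G.degree u : ℚ) ^ 2 - Fintype.card G.Dart) * (q₃ + q₃') +
        ((Fintype.card G.Dart : ℚ) ^ 2 - 4 * ∑ u, (G.degree u : ℚ) ^ 2 +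
          2 * Fintype.card G.Dart) * q₄ := by
  have hfst := card_filter_and_ne_add_card (P := fun x : G.Dart × G.Dart => x.1.fst = x.2.fst)
    fun _ => rfl
  have hsnd := card_filter_and_ne_add_card (P := fun x : G.Dart × G.Dart => x.1.snd = x.2.snd)
    fun _ => rfl
  rw [card_dart_pairs_eq_sum_degree_sq G G.dart_fst_fiber_card_eq_degree
    G.dart_fst_fiber_card_eq_degree] at hfst
  rw [card_dart_pairs_eq_sum_degree_sq G (card_dart_snd_fiber_eq_degree G)
    (card_dart_snd_fiber_eq_degree G)] at hsnd
  have hcross := card_dart_pairs_crossed_add_card_dart G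
  simp only [hF.eq_ite, sum_add_distrib, sum_sub_distrib, sum_ite, sum_const_zero, sum_const,
    nsmul_eq_mul, add_zero, card_univ, Fintype.card_prod, card_filter_diag]
  qify at hfst hsnd hcross
  push_cast
  linear_combination (q₃ - q₄) * hfst + (q₃' - q₄) * hsnd - q₄ * hcross

end HasOverlapValues

variable [Fintype V] {s : ℕ} {c : Fin s → ℕ} {i j : Fin s}

theorem hasOverlapValues_card_colorings (hij : i ≠ j) :
    HasOverlapValues (G := G)
      (fun d e =>
        #{f ∈ colorings V s c | (f d.fst = i ∧ f d.snd = j) ∧ (f e.fst = i ∧ f e.snd = j)})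
      (#(colorings V s c) * (c i * c j) / (Fintype.card V).descFactorial 2)
      (#(colorings V s c) * (c i * (c j).descFactorial 2) / (Fintype.card V).descFactorial 3)
      (#(colorings V s c) * ((c i).descFactorial 2 * c j) / (Fintype.card V).descFactorial 3)
      (#(colorings V s c) * ((c i).descFactorial 2 * (c j).descFactorial 2) /
        (Fintype.card V).descFactorial 4) where
  self d := by simpa only [and_self] using cast_card_colorings_filter_two hij d.fst_ne_snd
  fst_eq d e h hne := by
    simp only [← h, ← and_and_left]
    exact cast_card_colorings_filter_three_left hij d.fst_ne_snd (h ▸ e.fst_ne_snd) hne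
  snd_eq d e h hne := by
    have hcond : ∀ f : V → Fin s,
        ((f d.fst = i ∧ f d.snd = j) ∧ (f e.fst = i ∧ f e.snd = j)) ↔
        f d.fst = i ∧ f e.fst = i ∧ f d.snd = j := fun f => by rw [← h]; tauto
    simp only [hcond]
    exact cast_card_colorings_filter_three_right hij hne d.fst_ne_snd (h ▸ e.fst_ne_snd)
  crossed d e h := by
    rw [Nat.cast_eq_zero, card_eq_zero, filter_eq_empty_iff]
    rintro f - ⟨⟨hd₁, hd₂⟩, he₁, he₂⟩
    rcases h with h | h
    exacts [hij (by rw [← hd₁, h, he₂]), hij (by rw [← he₁, ← h, hd₂])]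
  disjoint d e h₁ h₂ h₃ h₄ := by
    simp only [and_assoc]
    exact cast_card_colorings_filter_four hij d.fst_ne_snd h₁ h₂ h₃ h₄ e.fst_ne_snd

end DartPairs

section Moments

variable {V : Type} [Fintype V] [DecidableEq V] (G : SimpleGraph V) [DecidableRel G.Adj]
  {s : ℕ} {c : Fin s → ℕ} {i j : Fin s}

theorem sum_cast_biEdges (hij : i ≠ j) :
    ∑ f ∈ colorings V s c, (biEdges V G s i j f : ℚ) =
      Fintype.card G.Dart *
        (#(colorings V s c) * (c i * c j) / (Fintype.card V).descFactorial 2) := by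
  have hswap := sum_card_bipartiteAbove_eq_sum_card_bipartiteBelow (s := colorings V s c)
    (t := (univ : Finset G.Dart)) (fun f d => f d.fst = i ∧ f d.snd = j)
  simp only [bipartiteAbove, bipartiteBelow] at hswap
  simp only [biEdges_eq_card_darts G hij]
  rw [← Nat.cast_sum, hswap, Nat.cast_sum,
    sum_congr rfl fun d _ => cast_card_colorings_filter_two hij d.fst_ne_snd, sum_const,
    card_univ, nsmul_eq_mul]

theorem sum_cast_biEdges_sq (hij : i ≠ j) :
    ∑ f ∈ colorings V s c, (biEdges V G s i j f : ℚ) ^ 2 =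
      ∑ x : G.Dart × G.Dart, (#{f ∈ colorings V s c | (f x.1.fst = i ∧ f x.1.snd = j) ∧
        (f x.2.fst = i ∧ f x.2.snd = j)} : ℚ) := by
  simp only [biEdges_eq_card_darts G hij]
  exact_mod_cast sum_card_filter_sq _ fun (d : G.Dart) (f : V → Fin s) => f d.fst = i ∧ f d.snd = j

end Moments

theorem variance_bi_edges_general (V : Type) [Fintype V] [DecidableEq V]
    (G : SimpleGraph V) [DecidableRel G.Adj] (n m p3 s : ℕ)
    (hn : Fintype.card V = n) (hm : G.edgeFinset.card = m)
    (hp3 : p3 = ∑ v : V, (G.degree v).choose 2)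
    (c : Fin s → ℕ) (hsum : ∑ i, c i = n)
    (i j : Fin s) (hij : i ≠ j) :
    (∑ f ∈ colorings V s c, (biEdges V G s i j f : ℚ) ^ 2) /
          ((colorings V s c).card : ℚ) -
        ((∑ f ∈ colorings V s c, (biEdges V G s i j f : ℚ)) /
          ((colorings V s c).card : ℚ)) ^ 2
      = 2 * (m : ℚ) * (((c i : ℚ) * (c j : ℚ)) / (n.descFactorial 2 : ℚ)) *
          (1 - 2 * (m : ℚ) * (((c i : ℚ) * (c j : ℚ)) / (n.descFactorial 2 : ℚ)))
        + 2 * ((((c i : ℚ) * ((c j).descFactorial 2 : ℚ)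
                  + ((c i).descFactorial 2 : ℚ) * (c j : ℚ)) / (n.descFactorial 3 : ℚ)
                - 4 * ((c i).descFactorial 2 : ℚ) * ((c j).descFactorial 2 : ℚ) /
                    (n.descFactorial 4 : ℚ)) * (p3 : ℚ)
              + 4 * (((c i).descFactorial 2 : ℚ) * ((c j).descFactorial 2 : ℚ) /
                    (n.descFactorial 4 : ℚ)) * (m.choose 2 : ℚ)) := by
  subst hn hm hp3
  have hK : (#(colorings V s c) : ℚ) ≠ 0 := by
    exact_mod_cast (colorings_nonempty hsum).card_pos.ne'
  rw [sum_cast_biEdges_sq G hij, (hasOverlapValues_card_colorings hij).sum_eq,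
    sum_cast_biEdges G hij, sum_cast_degree_sq, G.dart_card_eq_twice_card_edges,
    Nat.cast_choose_two]
  push_cast
  field_simp
  ring

/-- Theorem 1.2: under a uniform random `c`-coloring, for distinct colors
`i ≠ j`, the variance of the number `M^{i,j}` of `(i,j)`-edges equals
`2m (cᵢc_j/n^(2))(1 - 2m cᵢc_j/n^(2)) +
 2[((cᵢ c_j^(2) + cᵢ^(2) c_j)/n^(3) - 4 cᵢ^(2) c_j^(2)/n^(4)) π₃(G)
   + 4 (cᵢ^(2) c_j^(2)/n^(4)) (m choose 2)]`. -/
theorem variance_bi_edges (V : Type) [Fintype V] [DecidableEq V]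
    (G : SimpleGraph V) [DecidableRel G.Adj] (n m p3 s : ℕ)
    (hn : Fintype.card V = n) (hm : G.edgeFinset.card = m)
    (hp3 : p3 = ∑ v : V, (G.degree v).choose 2)
    (c : Fin s → ℕ) (hpos : ∀ i, 0 < c i) (hsum : ∑ i, c i = n)
    (i j : Fin s) (hij : i ≠ j) :
    (∑ f ∈ colorings V s c, (biEdges V G s i j f : ℚ) ^ 2) /
          ((colorings V s c).card : ℚ) -
        ((∑ f ∈ colorings V s c, (biEdges V G s i j f : ℚ)) /
          ((colorings V s c).card : ℚ)) ^ 2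
      = 2 * (m : ℚ) * (((c i : ℚ) * (c j : ℚ)) / (n.descFactorial 2 : ℚ)) *
          (1 - 2 * (m : ℚ) * (((c i : ℚ) * (c j : ℚ)) / (n.descFactorial 2 : ℚ)))
        + 2 * ((((c i : ℚ) * ((c j).descFactorial 2 : ℚ)
                  + ((c i).descFactorial 2 : ℚ) * (c j : ℚ)) / (n.descFactorial 3 : ℚ)
                - 4 * ((c i).descFactorial 2 : ℚ) * ((c j).descFactorial 2 : ℚ) /
                    (n.descFactorial 4 : ℚ)) * (p3 : ℚ)
              + 4 * (((c i).descFactorial 2 : ℚ) * ((c j).descFactorial 2 : ℚ) /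
                    (n.descFactorial 4 : ℚ)) * (m.choose 2 : ℚ)) :=
  variance_bi_edges_general V G n m p3 s hn hm hp3 c hsum i j hij
end
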